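/- Off-by-ℓ Zames–Falb ρ-hard IQC under multiplicative noise. Let n ∈ ℕ and let g : ℝⁿ → ℝ be an admissible potential with gradient ∇g. Let ρ ∈ (0,1], ℓ ≥ 1 a natural number, δ ∈ [0,1), and let γ satisfy 0 < γ ≤ (1−δ)/(1+δ). Let (δ_k) be any real sequence with |δ_k| ≤ δ for all k, let y : ℕ → ℝⁿ be any sequence, and set u_k = (1 + δ_k)·∇g(y_k), adopting the convention y_j = 0 for j < 0. Then for every T ∈ ℕ: ∑_{k=0}^{T} ρ^{−2k} ⟨u_k, y_k − γ·ρ^{2ℓ}·y_{k−ℓ}⟩ ≥ 0. -/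

import Mathlib

open scoped RealInnerProductSpace

theorem grad_convex_le' {n : ℕ} (g : EuclideanSpace ℝ (Fin n) → ℝ)
    (hconv : ConvexOn ℝ Set.univ g) (hdiff : Differentiable ℝ g)
    (x z : EuclideanSpace ℝ (Fin n)) :
    g x + ⟪gradient g x, z - x⟫ ≤ g z := by
  set v := z - x with hv
  have hgr : HasGradientAt g (gradient g x) x := (hdiff x).hasGradientAt
  have hF : HasFDerivAt g (InnerProductSpace.toDual ℝ _ (gradient g x)) x :=
    hasGradientAt_iff_hasFDerivAt.mp hgr
  have hline : HasDerivAt (fun t : ℝ => x + t • v) v 0 := by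
    simpa using ((hasDerivAt_id (0:ℝ)).smul_const v).const_add x
  have hcomp : HasDerivAt (fun t : ℝ => g (x + t • v))
      (⟪gradient g x, v⟫) 0 := by
    have hF2 : HasFDerivAt g (InnerProductSpace.toDual ℝ _ (gradient g x))
        ((fun t : ℝ => x + t • v) 0) := by simpa using hF
    have := hF2.comp_hasDerivAt 0 hline
    simpa [InnerProductSpace.toDual_apply_apply, Function.comp_def] using this
  have hfc : ConvexOn ℝ (Set.univ : Set ℝ) (fun t : ℝ => g (x + t • v)) := by
    have := hconv.comp_affineMap
      (AffineMap.const ℝ ℝ x + LinearMap.toAffineMap (LinearMap.toSpanSingleton ℝ _ v))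
    simpa [Function.comp_def, LinearMap.toSpanSingleton_apply] using this
  have hs := hfc.le_slope_of_hasDerivAt (Set.mem_univ (0:ℝ)) (Set.mem_univ 1)
    one_pos hcomp
  have : slope (fun t : ℝ => g (x + t • v)) 0 1 = g z - g x := by
    simp [slope, hv]
  rw [this] at hs
  linarith

/-- Appendix B.2: off-by-ℓ Zames–Falb ρ-hard IQC under multiplicative noise, for
`u_k = (1 + δ_k) ∇g(y_k)` with `|δ_k| ≤ δ` and `0 < γ ≤ (1-δ)/(1+δ)`. -/
theorem stmt_11 {n : ℕ} (g : EuclideanSpace ℝ (Fin n) → ℝ)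
    (hconv : ConvexOn ℝ Set.univ g) (hdiff : Differentiable ℝ g)
    (hnonneg : ∀ x, 0 ≤ g x) (hg0 : g 0 = 0)
    (ρ : ℝ) (hρ : ρ ∈ Set.Ioc (0 : ℝ) 1)
    (ℓ : ℕ) (hℓ : 1 ≤ ℓ)
    (δ : ℝ) (hδ : δ ∈ Set.Ico (0 : ℝ) 1)
    (γ : ℝ) (hγ0 : 0 < γ) (hγ : γ ≤ (1 - δ) / (1 + δ))
    (δseq : ℕ → ℝ) (hδseq : ∀ k, |δseq k| ≤ δ)
    (y : ℕ → EuclideanSpace ℝ (Fin n)) (u : ℕ → EuclideanSpace ℝ (Fin n))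
    (hu : ∀ k, u k = (1 + δseq k) • gradient g (y k)) :
    ∀ T : ℕ, 0 ≤ ∑ k ∈ Finset.range (T + 1),
      ρ ^ (-(2 * (k : ℤ))) *
        ⟪u k, y k - (γ * ρ ^ (2 * ℓ)) • (if ℓ ≤ k then y (k - ℓ) else 0)⟫ := by
  intro T
  obtain ⟨hρ0, hρ1⟩ := hρ
  obtain ⟨hδ0, hδ1⟩ := hδ
  have hρne : ρ ≠ 0 := ne_of_gt hρ0
  have h1δ : (0:ℝ) < 1 + δ := by linarith
  have hγδ : γ * (1 + δ) ≤ 1 - δ := by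
    rw [le_div_iff₀ h1δ] at hγ; linarith
  have hγ1 : γ ≤ 1 := by nlinarith
  set w : ℕ → EuclideanSpace ℝ (Fin n) :=
    fun k => if ℓ ≤ k then y (k - ℓ) else 0 with hw
  set φ : ℕ → ℝ := fun k => ρ ^ (-(2 * (k : ℤ))) * g (y k) with hφ
  set ψ : ℕ → ℝ := fun k => if ℓ ≤ k then φ (k - ℓ) else 0 with hψ
  have hzpos : ∀ k : ℕ, (0:ℝ) < ρ ^ (-(2 * (k : ℤ))) := fun k => zpow_pos hρ0 _
  have hφ0 : ∀ k, 0 ≤ φ k := fun k => mul_nonneg (hzpos k).le (hnonneg _)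
  have hψ0 : ∀ k, 0 ≤ ψ k := by
    intro k; simp only [hψ]; split <;> simp [hφ0]
  -- c := γ * ρ^(2ℓ), 0 ≤ c ≤ 1
  set c : ℝ := γ * ρ ^ (2 * ℓ) with hc
  have hρpow1 : ρ ^ (2 * ℓ) ≤ 1 := pow_le_one₀ hρ0.le hρ1
  have hρpow0 : (0:ℝ) < ρ ^ (2 * ℓ) := pow_pos hρ0 _
  have hc0 : 0 ≤ c := le_of_lt (mul_pos hγ0 hρpow0)
  have hc1 : c ≤ 1 := le_trans (mul_le_of_le_one_right hγ0.le hρpow1) hγ1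
  -- key: ρ^{-2k} * ρ^{2ℓ} * g(w k) = ψ k
  have hkey : ∀ k : ℕ, ρ ^ (-(2 * (k : ℤ))) * (ρ ^ (2 * ℓ) * g (w k)) = ψ k := by
    intro k
    simp only [hw, hψ, hφ]
    split
    · next h =>
      rw [← mul_assoc]
      congr 1
      rw [← zpow_natCast ρ (2 * ℓ), ← zpow_add₀ hρne]
      congr 1
      have : ((k - ℓ : ℕ) : ℤ) = (k : ℤ) - (ℓ : ℤ) := by
        exact_mod_cast Int.ofNat_sub h
      rw [this]; push_cast; ring
    · simp [hg0]
  -- per-term bound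
  have hterm : ∀ k, (1 - δ) * φ k - ((1 + δ) * γ) * ψ k ≤
      ρ ^ (-(2 * (k : ℤ))) * ⟪u k, y k - c • w k⟫ := by
    intro k
    have hδk := abs_le.mp (hδseq k)
    have hpos : 0 < 1 + δseq k := by linarith [hδk.1]
    set G := gradient g (y k) with hG
    have hinner : ⟪u k, y k - c • w k⟫
        = (1 + δseq k) * (⟪G, y k⟫ - c * ⟪G, w k⟫) := by
      rw [hu k]
      rw [real_inner_smul_left, inner_sub_right, real_inner_smul_right]
    have hself : g (y k) ≤ ⟪G, y k⟫ := by
      have := grad_convex_le' g hconv hdiff (y k) 0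
      have h2 : ⟪G, (0:EuclideanSpace ℝ (Fin n)) - y k⟫ = -⟪G, y k⟫ := by
        rw [inner_sub_right]; simp
      rw [hg0, h2] at this; linarith
    have hcross : ⟪G, w k⟫ ≤ g (w k) - g (y k) + ⟪G, y k⟫ := by
      have := grad_convex_le' g hconv hdiff (y k) (w k)
      rw [inner_sub_right] at this; linarith
    have hA : 0 ≤ g (y k) := hnonneg _
    have hB : 0 ≤ g (w k) := hnonneg _
    -- X ≥ g(y k) - c * g(w k)
    have hX : g (y k) - c * g (w k) ≤ ⟪G, y k⟫ - c * ⟪G, w k⟫ := by nlinarith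
    have hmul : (1 - δ) * g (y k) - (1 + δ) * (c * g (w k)) ≤
        (1 + δseq k) * (⟪G, y k⟫ - c * ⟪G, w k⟫) := by
      nlinarith [mul_le_mul_of_nonneg_left hX hpos.le,
        mul_le_mul_of_nonneg_right hδk.1 hA,
        mul_le_mul_of_nonneg_right hδk.2 (mul_nonneg hc0 hB)]
    rw [hinner]
    have := mul_le_mul_of_nonneg_left hmul (hzpos k).le
    calc (1 - δ) * φ k - ((1 + δ) * γ) * ψ k
        = ρ ^ (-(2 * (k : ℤ))) *
          ((1 - δ) * g (y k) - (1 + δ) * (c * g (w k))) := by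
          rw [← hkey k]; simp only [hφ, hc]; ring
      _ ≤ _ := this
  -- sum over ψ ≤ sum over φ
  have hsum : ∑ k ∈ Finset.range (T + 1), ψ k ≤ ∑ k ∈ Finset.range (T + 1), φ k := by
    have e1 : ∑ k ∈ Finset.range (T + 1), ψ k
        = ∑ k ∈ (Finset.range (T + 1)).filter (fun k => ℓ ≤ k), φ (k - ℓ) := by
      rw [Finset.sum_filter]
    rw [e1]
    have e2 : ∑ k ∈ (Finset.range (T + 1)).filter (fun k => ℓ ≤ k), φ (k - ℓ)
        = ∑ j ∈ ((Finset.range (T + 1)).filter (fun k => ℓ ≤ k)).image (· - ℓ), φ j := by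
      rw [Finset.sum_image]
      intro a ha b hb hab
      simp only [Finset.mem_coe, Finset.mem_filter] at ha hb
      beta_reduce at hab
      omega
    rw [e2]
    apply Finset.sum_le_sum_of_subset_of_nonneg
    · intro j hj
      simp only [Finset.mem_image, Finset.mem_filter, Finset.mem_range] at hj ⊢
      obtain ⟨a, ⟨ha1, _⟩, rfl⟩ := hj
      omega
    · intro i _ _; exact hφ0 i
  calc (0:ℝ) ≤ ∑ k ∈ Finset.range (T + 1),
        ((1 - δ) * φ k - ((1 + δ) * γ) * ψ k) := by
        rw [Finset.sum_sub_distrib, ← Finset.mul_sum, ← Finset.mul_sum]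
        have h1 : ((1 + δ) * γ) * ∑ k ∈ Finset.range (T + 1), ψ k
            ≤ (1 - δ) * ∑ k ∈ Finset.range (T + 1), ψ k := by
          apply mul_le_mul_of_nonneg_right _ (Finset.sum_nonneg fun i _ => hψ0 i)
          linarith [hγδ]
        have h2 : (1 - δ) * ∑ k ∈ Finset.range (T + 1), ψ k
            ≤ (1 - δ) * ∑ k ∈ Finset.range (T + 1), φ k :=
          mul_le_mul_of_nonneg_left hsum (by linarith)
        linarith
    _ ≤ _ := Finset.sum_le_sum fun k _ => hterm k
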